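/- arXiv:2111.05839 — 5 statements merged into one kernel-verified Lean document; each statement's English description precedes it below -/
import Mathlib

section
/- Let β^EQ be the common fill-rate of a feasible perfectly equitable solution that is non-utopian (Σ_i β^EQ D_i < S), and let m^U be the number of indices i with β^EQ < β̃_i (unbinding variables), with 0 < m^U < n. Then for every θ < m^U/(n − m^U) there exists a feasible solution (β, β_max) with objective Σ_i [β_i − θ(β_max − β_i)] strictly greater than Σ_i β^EQ = n·β^EQ. -/
theorem stmt_1 (n mU : ℕ) (hn : 0 < n)
    (D βt : Fin n → ℝ) (S βEQ θ : ℝ)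
    (hD : ∀ i, 0 < D i) (hS : 0 < S)
    (hβt : ∀ i, 0 ≤ βt i ∧ βt i ≤ 1)
    (hEQ0 : 0 ≤ βEQ) (hEQ1 : βEQ < 1)
    (hEQle : ∀ i, βEQ ≤ βt i)
    (hmU : mU = (Finset.univ.filter (fun i => βEQ < βt i)).card)
    (hmU0 : 0 < mU) (hmUn : mU < n)
    (hnonut : (∑ i, βEQ * D i) < S)
    (hθ0 : 0 ≤ θ) (hθ : θ < (mU : ℝ) / ((n : ℝ) - (mU : ℝ))) :
    ∃ (β : Fin n → ℝ) (βmax : ℝ),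
      ((∀ i, 0 ≤ β i ∧ β i ≤ βt i) ∧ (∀ i, β i ≤ βmax) ∧ βmax ≤ 1 ∧
        (∑ i, β i * D i) ≤ S) ∧
      (n : ℝ) * βEQ < ∑ i, (β i - θ * (βmax - β i)) := by
  classical
  set F : Finset (Fin n) := Finset.univ.filter (fun i => βEQ < βt i) with hF
  have hFne : F.Nonempty := by
    rw [← Finset.card_pos, ← hmU]; exact hmU0
  have hsumD : 0 < ∑ i, D i := by
    apply Finset.sum_pos (fun i _ => hD i)
    exact Finset.univ_nonempty_iff.mpr (Fin.pos_iff_nonempty.mp hn)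
  set ε₁ : ℝ := F.inf' hFne (fun i => βt i - βEQ) with hε₁
  set ε₃ : ℝ := (S - ∑ i, βEQ * D i) / (∑ i, D i) with hε₃
  set ε : ℝ := min ε₁ (min (1 - βEQ) ε₃) with hε
  have hε₁pos : 0 < ε₁ := by
    rw [hε₁, Finset.lt_inf'_iff]
    intro i hi
    have := (Finset.mem_filter.mp hi).2
    linarith
  have hε₃pos : 0 < ε₃ := div_pos (by linarith) hsumD
  have hεpos : 0 < ε := lt_min hε₁pos (lt_min (by linarith) hε₃pos)
  have hεle₁ : ∀ i ∈ F, ε ≤ βt i - βEQ := fun i hi =>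
    le_trans (min_le_left _ _) (Finset.inf'_le _ hi)
  have hεle2 : ε ≤ 1 - βEQ := le_trans (min_le_right _ _) (min_le_left _ _)
  have hεle3 : ε ≤ ε₃ := le_trans (min_le_right _ _) (min_le_right _ _)
  refine ⟨fun i => if βEQ < βt i then βEQ + ε else βEQ, βEQ + ε, ⟨?_, ?_, by linarith, ?_⟩, ?_⟩
  · intro i
    by_cases h : βEQ < βt i
    · simp only [h, if_true]
      refine ⟨by linarith, ?_⟩
      have := hεle₁ i (Finset.mem_filter.mpr ⟨Finset.mem_univ i, h⟩)
      linarith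
    · simp only [h, if_false]
      exact ⟨hEQ0, hEQle i⟩
  · intro i
    by_cases h : βEQ < βt i <;> simp [h] <;> linarith
  · have hle : ∀ i : Fin n, (if βEQ < βt i then βEQ + ε else βEQ) * D i ≤ (βEQ + ε) * D i := by
      intro i
      by_cases h : βEQ < βt i <;> simp [h]
      · nlinarith [hD i, hεpos]
    calc ∑ i, (if βEQ < βt i then βEQ + ε else βEQ) * D i
        ≤ ∑ i, (βEQ + ε) * D i := Finset.sum_le_sum (fun i _ => hle i)
      _ = (∑ i, βEQ * D i) + ε * ∑ i, D i := by
          rw [Finset.mul_sum]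
          simp [add_mul, Finset.sum_add_distrib, Finset.mul_sum]
      _ ≤ (∑ i, βEQ * D i) + ε₃ * ∑ i, D i := by
          have := mul_le_mul_of_nonneg_right hεle3 hsumD.le
          linarith
      _ ≤ S := by
          rw [hε₃, div_mul_cancel₀ _ hsumD.ne']
          linarith
  · have key : ∀ i : Fin n,
        ((if βEQ < βt i then βEQ + ε else βEQ)
          - θ * ((βEQ + ε) - (if βEQ < βt i then βEQ + ε else βEQ)))
        = (if βEQ < βt i then βEQ + ε else βEQ - θ * ε) := by
      intro i
      by_cases h : βEQ < βt i <;> simp [h] <;> ring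
    rw [Finset.sum_congr rfl (fun i _ => key i), Finset.sum_ite, Finset.sum_const,
      Finset.sum_const, ← hF, ← hmU]
    have hcard : (Finset.univ.filter (fun i => ¬ βEQ < βt i)).card = n - mU := by
      have := Finset.card_filter_add_card_filter_not
        (s := (Finset.univ : Finset (Fin n))) (p := fun i => βEQ < βt i)
      simp only [Finset.card_univ, Fintype.card_fin] at this
      have ha : (Finset.univ.filter (fun i => βEQ < βt i)).card = mU := hmU.symm
      omega
    rw [hcard]
    have hnm : (0:ℝ) < (n:ℝ) - (mU:ℝ) := by
      have : (mU:ℝ) < (n:ℝ) := by exact_mod_cast hmUn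
      linarith
    have hθ' : θ * ((n:ℝ) - (mU:ℝ)) < mU := (lt_div_iff₀ hnm).mp hθ
    have hcast : ((n - mU : ℕ) : ℝ) = (n:ℝ) - (mU:ℝ) := by
      push_cast [Nat.cast_sub hmUn.le]; ring
    simp only [nsmul_eq_mul, hcast]
    nlinarith [hεpos]
end

section
/- Let β^EQ be the common fill-rate of a feasible perfectly equitable solution with β̃_i = β^EQ for exactly n − m^U indices (binding) and β^EQ ≤ β̃_i for all i. Then for every θ ≥ m^U/(n − m^U) (with m^U < n), every feasible solution (β, β_max) satisfies Σ_i [β_i − θ(β_max − β_i)] ≤ n·β^EQ, i.e., the perfectly equitable solution is optimal. -/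
theorem stmt_2 (n mU : ℕ) (hn : 0 < n)
    (D βt : Fin n → ℝ) (S βEQ θ : ℝ)
    (hD : ∀ i, 0 < D i) (hS : 0 < S)
    (hβt : ∀ i, 0 ≤ βt i ∧ βt i ≤ 1)
    (hEQ0 : 0 ≤ βEQ)
    (hEQle : ∀ i, βEQ ≤ βt i)
    (hA : (Finset.univ.filter (fun i => βt i = βEQ)).card = n - mU)
    (hmUn : mU < n)
    (hθ : (mU : ℝ) / ((n : ℝ) - (mU : ℝ)) ≤ θ) :
    ∀ (β : Fin n → ℝ) (βmax : ℝ),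
      ((∀ i, 0 ≤ β i ∧ β i ≤ βt i) ∧ (∀ i, β i ≤ βmax) ∧ βmax ≤ 1 ∧
        (∑ i, β i * D i) ≤ S) →
      (∑ i, (β i - θ * (βmax - β i))) ≤ (n : ℝ) * βEQ := by
  rintro β βmax ⟨hfeas, hle, hmax1, hsum⟩
  set A := Finset.univ.filter (fun i => βt i = βEQ) with hAdef
  have hnmU : (0:ℝ) < (n:ℝ) - (mU:ℝ) := by
    have : (mU:ℝ) < (n:ℝ) := by exact_mod_cast hmUn
    linarith
  have hθ0 : 0 ≤ θ := le_trans (div_nonneg (Nat.cast_nonneg _) hnmU.le) hθ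
  have hθmU : (mU:ℝ) ≤ θ * ((n:ℝ) - (mU:ℝ)) := by
    rw [div_le_iff₀ hnmU] at hθ; linarith
  have hcardA : (A.card : ℝ) = (n:ℝ) - (mU:ℝ) := by
    rw [hA, Nat.cast_sub hmUn.le]
  have hcardAcN : Aᶜ.card = mU := by
    have := Finset.card_compl A
    rw [Fintype.card_fin, hA] at this
    omega
  have hobj : ∑ i, (β i - θ * (βmax - β i))
      = (1+θ) * (∑ i, β i) - (n:ℝ) * (θ * βmax) := by
    have : ∀ i ∈ Finset.univ, β i - θ * (βmax - β i) = (1+θ) * β i - θ * βmax :=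
      fun i _ => by ring
    rw [Finset.sum_congr rfl this, Finset.sum_sub_distrib, ← Finset.mul_sum,
      Finset.sum_const, Finset.card_univ, Fintype.card_fin, nsmul_eq_mul]
  rcases le_or_gt βmax βEQ with hc | hc
  · -- βmax ≤ βEQ
    have hsumle : ∑ i, β i ≤ (n:ℝ) * βmax := by
      calc ∑ i, β i ≤ ∑ _i : Fin n, βmax := Finset.sum_le_sum (fun i _ => hle i)
        _ = (n:ℝ) * βmax := by
          rw [Finset.sum_const, Finset.card_univ, Fintype.card_fin, nsmul_eq_mul]
    rw [hobj]
    have hnR : (0:ℝ) < (n:ℝ) := by exact_mod_cast hn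
    nlinarith [hnR]
  · -- βEQ < βmax
    have h1 : ∑ i ∈ A, β i ≤ ((n:ℝ) - (mU:ℝ)) * βEQ := by
      calc ∑ i ∈ A, β i ≤ ∑ i ∈ A, βEQ := by
            refine Finset.sum_le_sum (fun i hi => ?_)
            have := (Finset.mem_filter.mp hi).2
            calc β i ≤ βt i := (hfeas i).2
              _ = βEQ := this
        _ = ((n:ℝ) - (mU:ℝ)) * βEQ := by
            rw [Finset.sum_const, nsmul_eq_mul, hcardA]
    have h2 : ∑ i ∈ Aᶜ, β i ≤ (mU:ℝ) * βmax := by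
      calc ∑ i ∈ Aᶜ, β i ≤ ∑ _i ∈ Aᶜ, βmax := Finset.sum_le_sum (fun i _ => hle i)
        _ = (mU:ℝ) * βmax := by
            rw [Finset.sum_const, nsmul_eq_mul, hcardAcN]
    have hsplit : ∑ i, β i = ∑ i ∈ A, β i + ∑ i ∈ Aᶜ, β i :=
      (Finset.sum_add_sum_compl A _).symm
    rw [hobj, hsplit]
    nlinarith [mul_nonneg (sub_nonneg.mpr hθmU) (sub_nonneg.mpr hc.le)]
end

section
/- Under perfect equity with common fill-rate β^EQ = β^b = min_i β̃_i < S/D, the tightest upper bound on the penalty factor is θ^U = m^U/(n − m^U) where m^U = n − |J| and J = {j : β̃_j = β^b}; in particular θ^U ≤ n − 1. -/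
set_option maxHeartbeats 800000 in
theorem stmt_6 (n : ℕ) (hn : 2 ≤ n)
    (D βt : Fin n → ℝ) (S βb : ℝ)
    (hD : ∀ i, 0 < D i) (hS : 0 < S)
    (hβt : ∀ i, 0 < βt i ∧ βt i ≤ 1)
    (hβb : IsLeast (Set.range βt) βb)
    (hnonut : βb < S / (∑ i, D i))
    (mU : ℕ)
    (hmU : mU = n - (Finset.univ.filter (fun j => βt j = βb)).card)
    (hJ : (Finset.univ.filter (fun j => βt j = βb)).Nonempty) :
    (∀ θ : ℝ, (mU : ℝ) / ((n : ℝ) - (mU : ℝ)) ≤ θ →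
      ∀ (β : Fin n → ℝ) (βmax : ℝ),
        ((∀ i, 0 ≤ β i ∧ β i ≤ βt i) ∧ (∀ i, β i ≤ βmax) ∧ βmax ≤ 1 ∧
          (∑ i, β i * D i) ≤ S) →
        (∑ i, (β i - θ * (βmax - β i))) ≤ (n : ℝ) * βb) ∧
    (∀ θ : ℝ, 0 ≤ θ → θ < (mU : ℝ) / ((n : ℝ) - (mU : ℝ)) →
      ∃ (β : Fin n → ℝ) (βmax : ℝ),
        ((∀ i, 0 ≤ β i ∧ β i ≤ βt i) ∧ (∀ i, β i ≤ βmax) ∧ βmax ≤ 1 ∧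
          (∑ i, β i * D i) ≤ S) ∧
        (n : ℝ) * βb < ∑ i, (β i - θ * (βmax - β i))) ∧
    (mU : ℝ) / ((n : ℝ) - (mU : ℝ)) ≤ (n : ℝ) - 1 := by
  classical
  set J : Finset (Fin n) := Finset.univ.filter (fun j => βt j = βb) with hJdef
  set k : ℕ := J.card with hkdef
  have hk1 : 1 ≤ k := Finset.card_pos.mpr hJ
  have hkn : k ≤ n := by
    have := Finset.card_filter_le (Finset.univ : Finset (Fin n)) (fun j => βt j = βb)
    simpa [hkdef, hJdef] using this
  have hmUk : mU = n - k := hmU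
  have hcast : (mU : ℝ) = (n : ℝ) - (k : ℝ) := by
    rw [hmUk, Nat.cast_sub hkn]
  have hdenom : (n : ℝ) - (mU : ℝ) = (k : ℝ) := by rw [hcast]; ring
  have hkpos : (0 : ℝ) < (k : ℝ) := by exact_mod_cast hk1
  have hβb0 : 0 < βb := by
    obtain ⟨i, hi⟩ := hβb.1
    rw [← hi]; exact (hβt i).1
  have hcardcompl : (Finset.univ.filter (fun j => ¬ βt j = βb)).card = n - k := by
    have h := Finset.card_filter_add_card_filter_not
      (s := (Finset.univ : Finset (Fin n))) (p := fun j => βt j = βb)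
    have : k + (Finset.univ.filter (fun j => ¬ βt j = βb)).card = n := by
      simpa [hkdef, hJdef] using h
    omega
  refine ⟨?_, ?_, ?_⟩
  · -- part 1
    intro θ hθ β βmax ⟨hfeas, hmax, hmax1, hsup⟩
    rw [hdenom, hcast] at hθ
    have hθk : ((n : ℝ) - k) ≤ θ * k := by
      have := (div_le_iff₀ hkpos).mp hθ
      linarith
    have hθ0 : 0 ≤ θ := by
      have hnk : (0:ℝ) ≤ (n:ℝ) - k := by
        have : (k:ℝ) ≤ (n:ℝ) := by exact_mod_cast hkn
        linarith
      nlinarith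
    set c : ℝ := min βb βmax with hc
    have hcβb : c ≤ βb := min_le_left _ _
    have hcβmax : c ≤ βmax := min_le_right _ _
    have hc0 : 0 ≤ c := le_min hβb0.le ((hfeas ⟨0, by omega⟩).1.trans (hmax _))
    have h1 : ∑ j ∈ J, (β j - θ * (βmax - β j)) ≤ (k : ℝ) * ((1+θ)*c - θ*βmax) := by
      calc ∑ j ∈ J, (β j - θ * (βmax - β j))
          ≤ ∑ j ∈ J, ((1+θ)*c - θ*βmax) := by
            apply Finset.sum_le_sum
            intro j hj
            have hjJ : βt j = βb := by
              simp only [hJdef, Finset.mem_filter] at hj; exact hj.2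
            have hβjc : β j ≤ c := le_min (hjJ ▸ (hfeas j).2) (hmax j)
            nlinarith [hθ0]
        _ = (k : ℝ) * ((1+θ)*c - θ*βmax) := by
            rw [Finset.sum_const, nsmul_eq_mul]
    have h2 : ∑ i ∈ Finset.univ.filter (fun j => ¬ βt j = βb), (β i - θ * (βmax - β i))
        ≤ ((n : ℝ) - k) * βmax := by
      calc ∑ i ∈ Finset.univ.filter (fun j => ¬ βt j = βb), (β i - θ * (βmax - β i))
          ≤ ∑ i ∈ Finset.univ.filter (fun j => ¬ βt j = βb), βmax := by
            apply Finset.sum_le_sum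
            intro i _
            nlinarith [hmax i, hθ0]
        _ = ((n - k : ℕ) : ℝ) * βmax := by
            rw [Finset.sum_const, nsmul_eq_mul, hcardcompl]
        _ = ((n : ℝ) - k) * βmax := by rw [Nat.cast_sub hkn]
    have hsplit : ∑ i, (β i - θ * (βmax - β i)) =
        ∑ j ∈ J, (β j - θ * (βmax - β j)) +
        ∑ i ∈ Finset.univ.filter (fun j => ¬ βt j = βb), (β i - θ * (βmax - β i)) := by
      rw [hJdef]
      exact (Finset.sum_filter_add_sum_filter_not _ _ _).symm
    rw [hsplit]
    have hknR : (k : ℝ) ≤ (n : ℝ) := by exact_mod_cast hkn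
    nlinarith [hθk, hcβmax, hc0, hcβb, hkpos]
  · -- part 2
    intro θ hθ0 hθ
    rw [hdenom, hcast] at hθ
    have hmUpos : 0 < n - k := by
      by_contra h
      push_neg at h
      have : k = n := by omega
      rw [this] at hθ
      simp at hθ
      linarith
    have hcompl : (Finset.univ.filter (fun j => ¬ βt j = βb)).Nonempty := by
      rw [← Finset.card_pos, hcardcompl]; omega
    have hne : Nonempty (Fin n) := ⟨⟨0, by omega⟩⟩
    have hDpos : 0 < ∑ i, D i := Finset.sum_pos (fun i _ => hD i) Finset.univ_nonempty
    obtain ⟨ε, hεpos, hεup, hεsup⟩ :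
        ∃ ε : ℝ, 0 < ε ∧ (∀ i, ¬ βt i = βb → βb + ε ≤ βt i) ∧
          (βb + ε) * (∑ i, D i) ≤ S := by
      set δ1 : ℝ := (Finset.univ.filter (fun j => ¬ βt j = βb)).inf' hcompl
        (fun i => βt i - βb) with hδ1
      have hδ1pos : 0 < δ1 := by
        rw [hδ1, Finset.lt_inf'_iff]
        intro i hi
        simp only [Finset.mem_filter] at hi
        have h1 : βb ≤ βt i := hβb.2 ⟨i, rfl⟩
        have h2 : βb < βt i := lt_of_le_of_ne h1 (fun h => hi.2 h.symm)
        linarith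
      set δ2 : ℝ := S / (∑ i, D i) - βb with hδ2
      have hδ2pos : 0 < δ2 := by rw [hδ2]; linarith
      refine ⟨min δ1 δ2, lt_min hδ1pos hδ2pos, ?_, ?_⟩
      · intro i hi
        have h1 : δ1 ≤ βt i - βb := Finset.inf'_le _ (by simp [hi])
        have h2 : min δ1 δ2 ≤ δ1 := min_le_left _ _
        linarith
      · have h2 : min δ1 δ2 ≤ δ2 := min_le_right _ _
        have : βb + min δ1 δ2 ≤ S / (∑ i, D i) := by rw [hδ2] at h2; linarith
        calc (βb + min δ1 δ2) * (∑ i, D i) ≤ (S / ∑ i, D i) * (∑ i, D i) :=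
              mul_le_mul_of_nonneg_right this hDpos.le
          _ = S := by field_simp
    refine ⟨fun i => if βt i = βb then βb else βb + ε, βb + ε, ⟨?_, ?_, ?_, ?_⟩, ?_⟩
    · intro i
      by_cases h : βt i = βb
      · simp only [if_pos h]
        exact ⟨hβb0.le, h.ge⟩
      · simp only [if_neg h]
        exact ⟨by linarith, hεup i h⟩
    · intro i
      by_cases h : βt i = βb
      · simp only [if_pos h]; linarith
      · simp only [if_neg h]; exact le_rfl
    · obtain ⟨i, hi⟩ := hcompl
      simp only [Finset.mem_filter] at hi
      exact (hεup i hi.2).trans (hβt i).2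
    · calc ∑ i, (if βt i = βb then βb else βb + ε) * D i
          ≤ ∑ i, (βb + ε) * D i := by
            apply Finset.sum_le_sum
            intro i _
            have h3 : (if βt i = βb then βb else βb + ε) ≤ βb + ε := by
              by_cases h : βt i = βb
              · simp only [if_pos h]; linarith
              · simp only [if_neg h]; exact le_rfl
            exact mul_le_mul_of_nonneg_right h3 (hD i).le
        _ = (βb + ε) * ∑ i, D i := by rw [← Finset.mul_sum]
        _ ≤ S := hεsup
    · -- objective strictly larger
      have hsplit : ∑ i, ((if βt i = βb then βb else βb + ε) - θ * ((βb + ε) - (if βt i = βb then βb else βb + ε))) =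
          ∑ j ∈ J, ((if βt j = βb then βb else βb + ε) - θ * ((βb + ε) - (if βt j = βb then βb else βb + ε))) +
          ∑ i ∈ Finset.univ.filter (fun j => ¬ βt j = βb), ((if βt i = βb then βb else βb + ε) - θ * ((βb + ε) - (if βt i = βb then βb else βb + ε))) := by
        rw [hJdef]
        exact (Finset.sum_filter_add_sum_filter_not _ _ _).symm
      have hA : ∑ j ∈ J, ((if βt j = βb then βb else βb + ε) - θ * ((βb + ε) - (if βt j = βb then βb else βb + ε))) = (k : ℝ) * (βb - θ * ε) := by
        have hconst : ∀ j ∈ J, ((if βt j = βb then βb else βb + ε) - θ * ((βb + ε) - (if βt j = βb then βb else βb + ε))) = βb - θ * ε := by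
          intro j hj
          have hjJ : βt j = βb := by
            simp only [hJdef, Finset.mem_filter] at hj; exact hj.2
          rw [if_pos hjJ]
          ring
        rw [Finset.sum_congr rfl hconst, Finset.sum_const, nsmul_eq_mul]
      have hB : ∑ i ∈ Finset.univ.filter (fun j => ¬ βt j = βb), ((if βt i = βb then βb else βb + ε) - θ * ((βb + ε) - (if βt i = βb then βb else βb + ε))) = ((n : ℝ) - k) * (βb + ε) := by
        have hconst : ∀ i ∈ Finset.univ.filter (fun j => ¬ βt j = βb), ((if βt i = βb then βb else βb + ε) - θ * ((βb + ε) - (if βt i = βb then βb else βb + ε))) = βb + ε := by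
          intro i hi
          have hni : ¬ βt i = βb := by
            simp only [Finset.mem_filter] at hi; exact hi.2
          rw [if_neg hni]
          ring
        rw [Finset.sum_congr rfl hconst, Finset.sum_const, nsmul_eq_mul, hcardcompl, Nat.cast_sub hkn]
      rw [hsplit, hA, hB]
      have hθk : θ * k < (n : ℝ) - k := by
        have := (lt_div_iff₀ hkpos).mp hθ
        linarith
      nlinarith [hεpos, hθk]
  · -- part 3
    rw [hdenom, hcast]
    have hknR : (k : ℝ) ≤ (n : ℝ) := by exact_mod_cast hkn
    have hk1R : (1 : ℝ) ≤ (k : ℝ) := by exact_mod_cast hk1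
    rw [div_le_iff₀ hkpos]
    have hn2 : (2 : ℝ) ≤ (n : ℝ) := by exact_mod_cast hn
    nlinarith [mul_nonneg (by linarith : (0:ℝ) ≤ (n:ℝ) - 1) (by linarith : (0:ℝ) ≤ (k:ℝ) - 1)]
end

section
/- In a two-agency network with equal effective demands (β̃_1 D_1 = β̃_2 D_2) and D_1 < D_2, any efficiency-maximizing allocation under scarce supply S < β̃_1 D_1 allocates the entire supply to agency 1: the unique θ=0 optimum is β_1 = S/D_1, β_2 = 0. -/
theorem stmt_11 (D₁ D₂ βt₁ βt₂ S : ℝ)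
    (hD : 0 < D₁) (hDlt : D₁ < D₂)
    (hβt₁ : 0 < βt₁ ∧ βt₁ ≤ 1) (hβt₂ : 0 < βt₂ ∧ βt₂ ≤ 1)
    (heff : βt₁ * D₁ = βt₂ * D₂)
    (hS0 : 0 < S) (hSlt : S < βt₁ * D₁) :
    ∀ β₁ β₂ : ℝ,
      (0 ≤ β₁ ∧ β₁ ≤ βt₁) → (0 ≤ β₂ ∧ β₂ ≤ βt₂) →
      β₁ * D₁ + β₂ * D₂ ≤ S →
      β₁ + β₂ ≤ S / D₁ ∧ (β₁ + β₂ = S / D₁ → β₁ = S / D₁ ∧ β₂ = 0) := by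
  intro β₁ β₂ h₁ h₂ hsum
  have key : (β₁ + β₂) * D₁ ≤ S := by nlinarith [h₂.1]
  constructor
  · rw [le_div_iff₀ hD]; exact key
  · intro heq
    have hEq : (β₁ + β₂) * D₁ = S := by
      rw [heq]; field_simp
    have hβ₂ : β₂ = 0 := by nlinarith [h₂.1]
    constructor
    · linarith [heq, hβ₂]
    · exact hβ₂
end

section
/- Let β^EF be a feasible solution and K = {i : β_i^EF = β^EF} where β^EF = max_i β_i^EF < 1, and suppose L = {i ∉ K : β_i^EF < β̃_i} is empty and S < Σ_i β̃_i D_i. Set m^L = |K| < n. Then for every θ > m^L/(n − m^L), the solution β obtained from β^EF by reducing β_i to β^EF − α for all i ∈ K (α > 0 sufficiently small) is feasible and strictly dominates β^EF in the objective Σ_i [β_i − θ(max_j β_j − β_i)]. -/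
theorem stmt_13 (n mL : ℕ) (hne : (Finset.univ : Finset (Fin n)).Nonempty)
    (D βt βEF : Fin n → ℝ) (S βM : ℝ)
    (hD : ∀ i, 0 < D i) (hS : 0 < S)
    (hβt : ∀ i, 0 < βt i ∧ βt i ≤ 1)
    (hfeasEF : (∀ i, 0 ≤ βEF i ∧ βEF i ≤ βt i) ∧ (∑ i, βEF i * D i) ≤ S)
    (hβM : βM = Finset.univ.sup' hne βEF)
    (hβM1 : βM < 1) (hβM0 : 0 < βM)
    (hLempty : ∀ i, βEF i ≠ βM → βEF i = βt i)
    (hsupply : S < ∑ i, βt i * D i)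
    (hmL : mL = (Finset.univ.filter (fun i => βEF i = βM)).card)
    (hmLn : mL < n) :
    ∀ θ : ℝ, (mL : ℝ) / ((n : ℝ) - (mL : ℝ)) < θ →
      ∃ α₀ : ℝ, 0 < α₀ ∧ ∀ α : ℝ, 0 < α → α < α₀ →
        ((∀ i, 0 ≤ (fun i => if βEF i = βM then βEF i - α else βEF i) i ∧
            (fun i => if βEF i = βM then βEF i - α else βEF i) i ≤ βt i) ∧
          (∑ i, (fun i => if βEF i = βM then βEF i - α else βEF i) i * D i) ≤ S) ∧
        (1 + θ) * (∑ i, βEF i) - (n : ℝ) * θ * Finset.univ.sup' hne βEF <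
          (1 + θ) * (∑ i, (fun i => if βEF i = βM then βEF i - α else βEF i) i)
            - (n : ℝ) * θ *
              Finset.univ.sup' hne (fun i => if βEF i = βM then βEF i - α else βEF i) := by
  classical
  intro θ hθ
  -- basic facts
  have hle : ∀ i, βEF i ≤ βM := by
    intro i; rw [hβM]; exact Finset.le_sup' βEF (Finset.mem_univ i)
  obtain ⟨k, -, hk⟩ := Finset.exists_mem_eq_sup' hne βEF
  have hkM : βEF k = βM := by rw [hβM, hk]
  -- the complement set is nonempty
  have hcard : ((Finset.univ : Finset (Fin n)).filter (fun i => ¬ βEF i = βM)).card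
      = n - mL := by
    have h := Finset.card_filter_add_card_filter_not
      (s := (Finset.univ : Finset (Fin n))) (p := fun i => βEF i = βM)
    simp only [Finset.card_univ, Fintype.card_fin] at h
    omega
  have hKc : ((Finset.univ : Finset (Fin n)).filter (fun i => ¬ βEF i = βM)).Nonempty := by
    rw [← Finset.card_pos, hcard]; omega
  set M2 : ℝ := (((Finset.univ : Finset (Fin n)).filter (fun i => ¬ βEF i = βM)).sup' hKc βEF)
    with hM2
  have hM2lt : M2 < βM := by
    rw [hM2]
    apply Finset.sup'_lt_iff hKc |>.mpr
    intro i hi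
    simp only [Finset.mem_filter] at hi
    exact lt_of_le_of_ne (hle i) hi.2
  refine ⟨min βM (βM - M2), lt_min hβM0 (by linarith), ?_⟩
  intro α hα hαlt
  have hα1 : α < βM := lt_of_lt_of_le hαlt (min_le_left _ _)
  have hα2 : M2 < βM - α := by
    have := lt_of_lt_of_le hαlt (min_le_right _ _); linarith
  -- new sup
  have hsup : Finset.univ.sup' hne (fun i => if βEF i = βM then βEF i - α else βEF i)
      = βM - α := by
    apply le_antisymm
    · apply Finset.sup'_le
      intro i _
      by_cases h : βEF i = βM
      · simp [h]
      · simp only [h, if_false]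
        have : βEF i ≤ M2 := Finset.le_sup' βEF (by simp [h])
        linarith
    · have := Finset.le_sup' (f := fun i => if βEF i = βM then βEF i - α else βEF i)
        (Finset.mem_univ k)
      exact le_trans (by simp [hkM]) this
  -- new sum
  have hsum : (∑ i, (fun i => if βEF i = βM then βEF i - α else βEF i) i)
      = (∑ i, βEF i) - (mL : ℝ) * α := by
    have : ∀ i, (if βEF i = βM then βEF i - α else βEF i)
        = βEF i - (if βEF i = βM then α else 0) := by
      intro i; split <;> ring
    simp only [this, Finset.sum_sub_distrib, Finset.sum_ite_eq,
      Finset.sum_const, Finset.sum_ite, Finset.sum_const_zero, nsmul_eq_mul, add_zero]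
    rw [hmL]; ring
  refine ⟨⟨?_, ?_⟩, ?_⟩
  · intro i
    by_cases h : βEF i = βM
    · simp only [h, if_true]
      constructor
      · linarith
      · have := (hfeasEF.1 i).2; linarith
    · simp only [h, if_false]
      exact hfeasEF.1 i
  · refine le_trans (Finset.sum_le_sum ?_) hfeasEF.2
    intro i _
    apply mul_le_mul_of_nonneg_right _ (hD i).le
    by_cases h : βEF i = βM <;> simp [h] <;> linarith
  · rw [hsup, hsum, ← hβM]
    have hnm : (0:ℝ) < (n : ℝ) - (mL : ℝ) := by
      have : (mL:ℝ) < (n:ℝ) := by exact_mod_cast hmLn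
      linarith
    have h1 : (mL : ℝ) < θ * ((n:ℝ) - (mL:ℝ)) := by
      rw [div_lt_iff₀ hnm] at hθ; linarith
    nlinarith [mul_pos hα hnm]
end
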